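/- Let γ¹ : ℤ → ℝ² and γ² : ℤ → ℝ² be two discrete plane curves, and define z^m_n = det[γ¹_n, γ²_m] + Σ_k^n det[γ¹_{k−1}, γ¹_k] − Σ_k^m det[γ²_{k−1}, γ²_k] (bidirectional sums) and f^m_n = (γ¹_n + γ²_m, z^m_n) ∈ ℝ³. Then for every (n, m) ∈ ℤ², each of the four difference vectors f^m_{n+1} − f^m_n, f^m_{n−1} − f^m_n, f^{m+1}_n − f^m_n, f^{m−1}_n − f^m_n has the form (ξ, det[γ¹_n − γ²_m, ξ]) ∈ ℝ² × ℝ, where ξ ∈ ℝ² is its pair of first two coordinates. Consequently, the five points f^m_n, f^m_{n+1}, f^m_{n−1}, f^{m+1}_n, f^{m−1}_n all lie on a common affine plane in ℝ³, namely the plane through f^m_n with direction space {(ξ, det[γ¹_n − γ²_m, ξ]) : ξ ∈ ℝ²}. -/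

import Mathlib

/-- Bidirectional sum: `Σ_k^n x_k = Σ_{k=1}^n x_k` for `n ≥ 1`, `0` for `n = 0`, and
`−Σ_{k=n+1}^0 x_k` for `n ≤ −1`. -/
noncomputable def bsum (x : ℤ → ℝ) (n : ℤ) : ℝ :=
  if 1 ≤ n then ∑ k ∈ Finset.Icc (1:ℤ) n, x k
  else if n = 0 then 0
  else -∑ k ∈ Finset.Icc (n+1) (0:ℤ), x k

/-- Determinant of the `2×2` matrix with columns `a`, `b` in `ℝ²`. -/
def det2 (a b : ℝ × ℝ) : ℝ := a.1 * b.2 - a.2 * b.1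


private lemma bsum_succ' (x : ℤ → ℝ) (n : ℤ) : bsum x (n+1) = bsum x n + x (n+1) := by
  unfold bsum
  rcases (show n ≤ -2 ∨ n = -1 ∨ n = 0 ∨ 1 ≤ n by omega) with h | h | h | h
  · have h1 : ¬ (1:ℤ) ≤ n + 1 := by omega
    have h2 : ¬ (1:ℤ) ≤ n := by omega
    simp only [if_neg h1, if_neg h2, if_neg (show n + 1 ≠ 0 by omega),
      if_neg (show n ≠ 0 by omega)]
    have hins : Finset.Icc (n+1) (0:ℤ) = insert (n+1) (Finset.Icc (n+1+1) 0) := by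
      ext k; simp; omega
    rw [hins, Finset.sum_insert (by simp)]
    ring
  · subst h
    simp only [if_neg (show ¬(1:ℤ) ≤ -1+1 by norm_num), if_pos (show (-1:ℤ)+1 = 0 by norm_num),
      if_neg (show ¬(1:ℤ) ≤ -1 by norm_num), if_neg (show (-1:ℤ) ≠ 0 by norm_num)]
    norm_num
  · subst h
    simp only [if_pos (show (1:ℤ) ≤ 0+1 by norm_num), if_neg (show ¬(1:ℤ) ≤ (0:ℤ) by norm_num),
      if_pos rfl]
    norm_num [Finset.Icc_self]
  · have h1 : (1:ℤ) ≤ n := h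
    simp only [if_pos (by omega : (1:ℤ) ≤ n + 1), if_pos h1]
    have hins : Finset.Icc (1:ℤ) (n+1) = insert (n+1) (Finset.Icc 1 n) := by
      ext k; simp; omega
    rw [hins, Finset.sum_insert (by simp)]
    ring

/-- For `f^m_n = (γ¹_n + γ²_m, z^m_n) ∈ ℝ² × ℝ`, each of the four difference vectors from
`f^m_n` to its neighbours has the form `(ξ, det[γ¹_n − γ²_m, ξ])`; consequently the five
points `f^m_n, f^m_{n±1}, f^{m±1}_n` lie on the affine plane through `f^m_n` with direction
space `{(ξ, det[γ¹_n − γ²_m, ξ]) : ξ ∈ ℝ²}`.  Here `f n m` denotes `f^m_n`. -/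
theorem stmt14 (γ₁ γ₂ : ℤ → ℝ × ℝ)
    (z : ℤ → ℤ → ℝ)
    (hz : ∀ n m, z n m = det2 (γ₁ n) (γ₂ m)
      + bsum (fun k => det2 (γ₁ (k-1)) (γ₁ k)) n
      - bsum (fun k => det2 (γ₂ (k-1)) (γ₂ k)) m)
    (f : ℤ → ℤ → (ℝ × ℝ) × ℝ)
    (hf : ∀ n m, f n m = (γ₁ n + γ₂ m, z n m)) :
    ∀ n m : ℤ,
      ((f (n+1) m - f n m).2 = det2 (γ₁ n - γ₂ m) (f (n+1) m - f n m).1 ∧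
       (f (n-1) m - f n m).2 = det2 (γ₁ n - γ₂ m) (f (n-1) m - f n m).1 ∧
       (f n (m+1) - f n m).2 = det2 (γ₁ n - γ₂ m) (f n (m+1) - f n m).1 ∧
       (f n (m-1) - f n m).2 = det2 (γ₁ n - γ₂ m) (f n (m-1) - f n m).1) ∧
      ∀ p ∈ ({f n m, f (n+1) m, f (n-1) m, f n (m+1), f n (m-1)} :
          Set ((ℝ × ℝ) × ℝ)),
        p - f n m ∈ {x : (ℝ × ℝ) × ℝ | x.2 = det2 (γ₁ n - γ₂ m) x.1} := by
  intro n m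
  have e1 := bsum_succ' (fun k => det2 (γ₁ (k-1)) (γ₁ k)) n
  have e2 := bsum_succ' (fun k => det2 (γ₁ (k-1)) (γ₁ k)) (n-1)
  have e3 := bsum_succ' (fun k => det2 (γ₂ (k-1)) (γ₂ k)) m
  have e4 := bsum_succ' (fun k => det2 (γ₂ (k-1)) (γ₂ k)) (m-1)
  rw [sub_add_cancel] at e2 e4
  simp only [add_sub_cancel_right] at e1 e2 e3 e4
  have h4 : (f (n+1) m - f n m).2 = det2 (γ₁ n - γ₂ m) (f (n+1) m - f n m).1 ∧
       (f (n-1) m - f n m).2 = det2 (γ₁ n - γ₂ m) (f (n-1) m - f n m).1 ∧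
       (f n (m+1) - f n m).2 = det2 (γ₁ n - γ₂ m) (f n (m+1) - f n m).1 ∧
       (f n (m-1) - f n m).2 = det2 (γ₁ n - γ₂ m) (f n (m-1) - f n m).1 := by
    refine ⟨?_, ?_, ?_, ?_⟩
    · simp only [hf, Prod.snd_sub, Prod.fst_sub, hz, e1]
      simp only [det2, Prod.fst_add, Prod.snd_add, Prod.fst_sub, Prod.snd_sub]
      ring
    · simp only [hf, Prod.snd_sub, Prod.fst_sub, hz, e2]
      simp only [det2, Prod.fst_add, Prod.snd_add, Prod.fst_sub, Prod.snd_sub]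
      ring
    · simp only [hf, Prod.snd_sub, Prod.fst_sub, hz, e3]
      simp only [det2, Prod.fst_add, Prod.snd_add, Prod.fst_sub, Prod.snd_sub]
      ring
    · simp only [hf, Prod.snd_sub, Prod.fst_sub, hz, e4]
      simp only [det2, Prod.fst_add, Prod.snd_add, Prod.fst_sub, Prod.snd_sub]
      ring
  refine ⟨h4, ?_⟩
  rintro p (rfl | rfl | rfl | rfl | rfl)
  · simp [det2]
  · exact h4.1
  · exact h4.2.1
  · exact h4.2.2.1
  · exact h4.2.2.2
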